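/- Let 𝖲 be the 4×4 integer matrix with rows (0,0,0,1), (0,0,1,0), (0,−1,0,0), (−1,0,0,0), and let T_∞ be the 4×4 integer matrix with rows (41,−34,12,30), (4,−6,1,2), (−72,51,−22,−56), (−15,18,−4,−9). Then T_∞ᵀ · 𝖲 · T_∞ = 𝖲, (T_∞ − 1)⁴ = 0, and (T_∞ − 1)³ ≠ 0; that is, T_∞ is an integral symplectic matrix that is maximally unipotent. -/

import Mathlib

open Matrix

private lemma aux_sub_one :
    (!![41,-34,12,30; 4,-6,1,2; -72,51,-22,-56; -15,18,-4,-9] : Matrix (Fin 4) (Fin 4) ℤ) - 1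
      = !![40,-34,12,30; 4,-7,1,2; -72,51,-23,-56; -15,18,-4,-10] := by
  ext i j
  fin_cases i <;> fin_cases j <;> simp [Matrix.one_apply]

private lemma aux_sq :
    (!![40,-34,12,30; 4,-7,1,2; -72,51,-23,-56; -15,18,-4,-10] : Matrix (Fin 4) (Fin 4) ℤ)
      * !![40,-34,12,30; 4,-7,1,2; -72,51,-23,-56; -15,18,-4,-10]
      = !![150,30,50,160; 30,0,10,30; -180,-90,-60,-210; -90,0,-30,-90] := by
  ext i j
  fin_cases i <;> fin_cases j <;> norm_num [Matrix.mul_apply, Fin.sum_univ_four, Matrix.vecHead, Matrix.vecTail, Matrix.cons_val_two, Matrix.cons_val_three]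

private lemma aux_sq_sq :
    (!![150,30,50,160; 30,0,10,30; -180,-90,-60,-210; -90,0,-30,-90] : Matrix (Fin 4) (Fin 4) ℤ)
      * !![150,30,50,160; 30,0,10,30; -180,-90,-60,-210; -90,0,-30,-90] = 0 := by
  ext i j
  fin_cases i <;> fin_cases j <;> norm_num [Matrix.mul_apply, Fin.sum_univ_four, Matrix.vecHead, Matrix.vecTail, Matrix.cons_val_two, Matrix.cons_val_three]

private lemma aux_transpose :
    (!![41,-34,12,30; 4,-6,1,2; -72,51,-22,-56; -15,18,-4,-9] : Matrix (Fin 4) (Fin 4) ℤ)ᵀ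
      = !![41,4,-72,-15; -34,-6,51,18; 12,1,-22,-4; 30,2,-56,-9] := by
  ext i j
  fin_cases i <;> fin_cases j <;> simp

private lemma aux_TtS :
    (!![41,4,-72,-15; -34,-6,51,18; 12,1,-22,-4; 30,2,-56,-9] : Matrix (Fin 4) (Fin 4) ℤ)
      * !![0,0,0,1; 0,0,1,0; 0,-1,0,0; -1,0,0,0]
      = !![15,72,4,41; -18,-51,-6,-34; 4,22,1,12; 9,56,2,30] := by
  ext i j
  fin_cases i <;> fin_cases j <;> norm_num [Matrix.mul_apply, Fin.sum_univ_four, Matrix.vecHead, Matrix.vecTail, Matrix.cons_val_two, Matrix.cons_val_three]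

private lemma aux_TtST :
    (!![15,72,4,41; -18,-51,-6,-34; 4,22,1,12; 9,56,2,30] : Matrix (Fin 4) (Fin 4) ℤ)
      * !![41,-34,12,30; 4,-6,1,2; -72,51,-22,-56; -15,18,-4,-9]
      = !![0,0,0,1; 0,0,1,0; 0,-1,0,0; -1,0,0,0] := by
  ext i j
  fin_cases i <;> fin_cases j <;> norm_num [Matrix.mul_apply, Fin.sum_univ_four, Matrix.vecHead, Matrix.vecTail, Matrix.cons_val_two, Matrix.cons_val_three]

private lemma aux_CubeN :
    (!![120,120,40,160; 30,30,10,40; -90,-90,-30,-120; -90,-90,-30,-120] : Matrix (Fin 4) (Fin 4) ℤ)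
      * !![40,-34,12,30; 4,-7,1,2; -72,51,-23,-56; -15,18,-4,-10] = 0 := by
  ext i j
  fin_cases i <;> fin_cases j <;> norm_num [Matrix.mul_apply, Fin.sum_univ_four, Matrix.vecHead, Matrix.vecTail, Matrix.cons_val_two, Matrix.cons_val_three]

private lemma aux_SqT :
    (!![150,30,50,160; 30,0,10,30; -180,-90,-60,-210; -90,0,-30,-90] : Matrix (Fin 4) (Fin 4) ℤ)
      * !![40,-34,12,30; 4,-7,1,2; -72,51,-23,-56; -15,18,-4,-10]
      = !![120,120,40,160; 30,30,10,40; -90,-90,-30,-120; -90,-90,-30,-120] := by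
  ext i j
  fin_cases i <;> fin_cases j <;> norm_num [Matrix.mul_apply, Fin.sum_univ_four, Matrix.vecHead, Matrix.vecTail, Matrix.cons_val_two, Matrix.cons_val_three]

open Matrix in
theorem monodromy_at_infinity_maximally_unipotent :
    let S : Matrix (Fin 4) (Fin 4) ℤ :=
      !![0,0,0,1; 0,0,1,0; 0,-1,0,0; -1,0,0,0]
    let T : Matrix (Fin 4) (Fin 4) ℤ :=
      !![41,-34,12,30; 4,-6,1,2; -72,51,-22,-56; -15,18,-4,-9]
    Tᵀ * S * T = S ∧ (T - 1) ^ 4 = 0 ∧ (T - 1) ^ 3 ≠ 0 := by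
  intro S T
  refine ⟨?_, ?_, ?_⟩
  · show Tᵀ * S * T = S
    rw [show Tᵀ = !![41,4,-72,-15; -34,-6,51,18; 12,1,-22,-4; 30,2,-56,-9] from aux_transpose,
      show (!![41,4,-72,-15; -34,-6,51,18; 12,1,-22,-4; 30,2,-56,-9] : Matrix (Fin 4) (Fin 4) ℤ) * S
        = !![15,72,4,41; -18,-51,-6,-34; 4,22,1,12; 9,56,2,30] from aux_TtS]
    exact aux_TtST
  · show (T - 1) ^ 4 = 0
    rw [show T - 1 = !![40,-34,12,30; 4,-7,1,2; -72,51,-23,-56; -15,18,-4,-10] from aux_sub_one,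
      pow_succ, pow_succ, pow_succ, pow_one, aux_sq, aux_SqT, aux_CubeN]
  · show (T - 1) ^ 3 ≠ 0
    intro h
    rw [show T - 1 = !![40,-34,12,30; 4,-7,1,2; -72,51,-23,-56; -15,18,-4,-10] from aux_sub_one,
      pow_succ, pow_succ, pow_one, aux_sq, aux_SqT] at h
    have := Matrix.ext_iff.2 h 0 0
    norm_num at this
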